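/- (Impossibility of ideal routing on the square cluster by local passive optics.) Let s > 0 with s ≠ 1, let Γ be the covariance matrix of the square cluster state (Γ = S·Γ_sqz(4,s)·Sᵀ with S built from the 4-cycle adjacency matrix A_sq = [[0,1,1,0],[1,0,0,1],[1,0,0,1],[0,1,1,0]] via X = (1+A_sq²)^{-1/2}, Y = A_sq X, S = fromBlocks X (−Y) Y X), written in ordering (Q₁,Q₂,P₁,P₂,Q₃,Q₄,P₃,P₄) where Alice holds modes {1,2} and Bob modes {3,4}. For any 2×2 complex unitaries U_A, U_B, let S_A = fromBlocks (Re U_A) (−Im U_A) (Im U_A) (Re U_A) and similarly S_B, and let Γ' = blockdiag(S_A,S_B) · Γ · blockdiag(S_A,S_B)ᵀ. Then for every Alice mode a ∈ {1,2} and Bob mode b ∈ {3,4}, the 4×4 reduced matrix of Γ' on the quadratures (Q_a, Q_b, P_a, P_b) is NOT equal to Γ_EPR((s+s⁻¹)/2, (s−s⁻¹)/2). Hence no local passive linear-optical transformation extracts a perfect EPR pair between Alice and Bob from the square cluster. -/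

import Mathlib

open Matrix

noncomputable section

/-- For a real symmetric matrix `A`, the matrix `1 + A²` is positive definite. -/
theorem onePlusSq_posDef {n : ℕ} (A : Matrix (Fin n) (Fin n) ℝ) (hA : Aᵀ = A) :
    (1 + A * A).PosDef := by
  have h2 : (A * A).PosSemidef := by
    have h := Matrix.posSemidef_conjTranspose_mul_self A
    simpa [Matrix.conjTranspose_eq_transpose_of_trivial, hA] using h
  exact Matrix.PosDef.add_posSemidef Matrix.PosDef.one h2

open scoped MatrixOrder in
/-- `(1 + A²)^{-1/2}`: the inverse of the unique positive-definite square root of `1 + A²`. -/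
def invSqrtOnePlusSq {n : ℕ} (A : Matrix (Fin n) (Fin n) ℝ) (hA : Aᵀ = A) :
    Matrix (Fin n) (Fin n) ℝ :=
  (CFC.sqrt (1 + A * A))⁻¹

/-- Covariance matrix `diag(s,…,s,s⁻¹,…,s⁻¹)` of `n` equally squeezed vacuum modes. -/
def GammaSqz (n : ℕ) (s : ℝ) : Matrix (Fin n ⊕ Fin n) (Fin n ⊕ Fin n) ℝ :=
  Matrix.fromBlocks (s • 1) 0 0 (s⁻¹ • 1)

/-- The 4×4 EPR covariance matrix with diagonal entries `l` and antidiagonal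
entries `m`, in ordering `(Q₁,Q₂,P₁,P₂)`. -/
def GammaEPR (l m : ℝ) : Matrix (Fin 2 ⊕ Fin 2) (Fin 2 ⊕ Fin 2) ℝ :=
  Matrix.fromBlocks (l • 1) (m • !![0,1;1,0]) (m • !![0,1;1,0]) (l • 1)

/-- Adjacency matrix of the 4-cycle with edges {1,2},{1,3},{2,4},{3,4}. -/
def Asq : Matrix (Fin 4) (Fin 4) ℝ := !![0,1,1,0; 1,0,0,1; 1,0,0,1; 0,1,1,0]

theorem Asq_symm : Asqᵀ = Asq := by
  ext i j
  fin_cases i <;> fin_cases j <;> simp [Asq, Matrix.transpose_apply]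

/-- Covariance matrix of the square cluster state built with squeezing `s`,
in global quadrature ordering `(Q₁,…,Q₄,P₁,…,P₄)`. -/
def GammaSquare (s : ℝ) : Matrix (Fin 4 ⊕ Fin 4) (Fin 4 ⊕ Fin 4) ℝ :=
  Matrix.fromBlocks (invSqrtOnePlusSq Asq Asq_symm) (-(Asq * invSqrtOnePlusSq Asq Asq_symm))
      (Asq * invSqrtOnePlusSq Asq Asq_symm) (invSqrtOnePlusSq Asq Asq_symm) *
    GammaSqz 4 s *
    (Matrix.fromBlocks (invSqrtOnePlusSq Asq Asq_symm) (-(Asq * invSqrtOnePlusSq Asq Asq_symm))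
        (Asq * invSqrtOnePlusSq Asq Asq_symm) (invSqrtOnePlusSq Asq Asq_symm))ᵀ

/-- Reindexing from the party-local ordering `(Q₁,Q₂,P₁,P₂,Q₃,Q₄,P₃,P₄)`
(Alice holds modes 1,2; Bob modes 3,4) into the global ordering `(Q₁,…,Q₄,P₁,…,P₄)`. -/
def sqIdx : (Fin 2 ⊕ Fin 2) ⊕ (Fin 2 ⊕ Fin 2) → Fin 4 ⊕ Fin 4
  | Sum.inl (Sum.inl i) => Sum.inl ⟨i.val, by omega⟩
  | Sum.inl (Sum.inr i) => Sum.inr ⟨i.val, by omega⟩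
  | Sum.inr (Sum.inl i) => Sum.inl ⟨i.val + 2, by omega⟩
  | Sum.inr (Sum.inr i) => Sum.inr ⟨i.val + 2, by omega⟩

/-- Real part of a complex matrix. -/
def reM (U : Matrix (Fin 2) (Fin 2) ℂ) : Matrix (Fin 2) (Fin 2) ℝ :=
  Matrix.of fun i j => (U i j).re

/-- Imaginary part of a complex matrix. -/
def imM (U : Matrix (Fin 2) (Fin 2) ℂ) : Matrix (Fin 2) (Fin 2) ℝ :=
  Matrix.of fun i j => (U i j).im

/-- Passive symplectic transformation of a 2-mode party associated to a 2×2 complex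
unitary `U`. -/
def passive2 (U : Matrix (Fin 2) (Fin 2) ℂ) : Matrix (Fin 2 ⊕ Fin 2) (Fin 2 ⊕ Fin 2) ℝ :=
  Matrix.fromBlocks (reM U) (-imM U) (imM U) (reM U)

/-- Quadrature indices `(Q_a, Q_b, P_a, P_b)` of Alice's local mode `a` and Bob's
local mode `b` in the party-local ordering. -/
def pairEmb (a b : Fin 2) : Fin 2 ⊕ Fin 2 → (Fin 2 ⊕ Fin 2) ⊕ (Fin 2 ⊕ Fin 2)
  | Sum.inl i => if i = 0 then Sum.inl (Sum.inl a) else Sum.inr (Sum.inl b)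
  | Sum.inr i => if i = 0 then Sum.inl (Sum.inr a) else Sum.inr (Sum.inr b)

/-! ### Auxiliary development -/

/-- explicit inverse of `1 + Asq * Asq` -/
def Minv4 : Matrix (Fin 4) (Fin 4) ℝ :=
  (5:ℝ)⁻¹ • !![3,0,0,-2; 0,3,-2,0; 0,-2,3,0; -2,0,0,3]

lemma onePlus_mul_Minv4 : (1 + Asq * Asq) * Minv4 = 1 := by
  ext i j
  fin_cases i <;> fin_cases j <;>
    simp [Asq, Minv4, Matrix.mul_apply, Fin.sum_univ_four, Matrix.one_apply] <;> norm_num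

lemma inv_onePlus : (1 + Asq * Asq)⁻¹ = Minv4 :=
  Matrix.inv_eq_right_inv onePlus_mul_Minv4

open scoped MatrixOrder in
lemma sqrt_mul_self' :
    CFC.sqrt (1 + Asq * Asq) *
      CFC.sqrt (1 + Asq * Asq) = 1 + Asq * Asq :=
  CFC.sqrt_mul_sqrt_self _ (onePlusSq_posDef Asq Asq_symm).posSemidef.nonneg

lemma X_mul_X : invSqrtOnePlusSq Asq Asq_symm * invSqrtOnePlusSq Asq Asq_symm = Minv4 := by
  rw [invSqrtOnePlusSq, ← Matrix.mul_inv_rev, sqrt_mul_self', inv_onePlus]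

lemma X_symm : (invSqrtOnePlusSq Asq Asq_symm)ᵀ = invSqrtOnePlusSq Asq Asq_symm := by
  rw [invSqrtOnePlusSq, Matrix.transpose_nonsing_inv]
  congr 1
  have h := (Matrix.nonneg_iff_posSemidef.mp (open scoped MatrixOrder in CFC.sqrt_nonneg (1 + Asq * Asq))).isHermitian
  ext i j
  have := congrFun (congrFun h i) j
  simpa [Matrix.conjTranspose_apply] using this

def Qq (s : ℝ) := s • Minv4 + s⁻¹ • (Asq * Minv4 * Asq)
def Qp (s : ℝ) := s • (Minv4 * Asq) - s⁻¹ • (Asq * Minv4)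
def Pq (s : ℝ) := s • (Asq * Minv4) - s⁻¹ • (Minv4 * Asq)
def Pp (s : ℝ) := s • (Asq * Minv4 * Asq) + s⁻¹ • Minv4

lemma gammaSquare_eq (s : ℝ) :
    GammaSquare s = fromBlocks (Qq s) (Qp s) (Pq s) (Pp s) := by
  set X4 := invSqrtOnePlusSq Asq Asq_symm with hX4
  have hXT : X4ᵀ = X4 := X_symm
  have hXX : X4 * X4 = Minv4 := X_mul_X
  have h2 : (Asq*X4)*(X4*Asq) = Asq*Minv4*Asq := by
    rw [Matrix.mul_assoc Asq X4 (X4*Asq), ← Matrix.mul_assoc X4 X4 Asq, hXX,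
      ← Matrix.mul_assoc]
  have h3 : X4*(X4*Asq) = Minv4*Asq := by rw [← Matrix.mul_assoc, hXX]
  have h4 : (Asq*X4)*X4 = Asq*Minv4 := by rw [Matrix.mul_assoc, hXX]
  rw [GammaSquare, GammaSqz]
  simp only [← hX4, fromBlocks_transpose, transpose_neg, transpose_mul, Asq_symm, hXT,
    fromBlocks_multiply, Matrix.mul_zero, Matrix.zero_mul, add_zero, zero_add,
    Matrix.mul_smul, Matrix.smul_mul, Matrix.mul_one, Matrix.neg_mul, Matrix.mul_neg,
    neg_neg, smul_neg]
  rw [fromBlocks_inj]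
  refine ⟨?_, ?_, ?_, ?_⟩ <;>
    simp only [hXX, h2, h3, h4, Qq, Qp, Pq, Pp] <;> abel

def σr : Matrix (Fin 2) (Fin 2) ℝ := !![0,1;1,0]

lemma hMA : Minv4 * Asq = (5:ℝ)⁻¹ • Asq := by
  ext i j
  fin_cases i <;> fin_cases j <;>
    norm_num [Minv4, Asq, Matrix.mul_apply, Fin.sum_univ_four, Matrix.cons_val_two, Matrix.cons_val_three]

lemma hAM : Asq * Minv4 = (5:ℝ)⁻¹ • Asq := by
  ext i j
  fin_cases i <;> fin_cases j <;>
    norm_num [Minv4, Asq, Matrix.mul_apply, Fin.sum_univ_four, Matrix.cons_val_two, Matrix.cons_val_three]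

lemma hAMA : Asq * Minv4 * Asq =
    (5:ℝ)⁻¹ • !![2,0,0,2; 0,2,2,0; 0,2,2,0; 2,0,0,2] := by
  rw [hAM, Matrix.smul_mul]
  ext i j
  fin_cases i <;> fin_cases j <;>
    norm_num [Asq, Matrix.mul_apply, Fin.sum_univ_four]

lemma toBlocks12_eq (s : ℝ) :
    ((fromBlocks (Qq s) (Qp s) (Pq s) (Pp s)).submatrix sqIdx sqIdx).toBlocks₁₂ =
      fromBlocks (((2*s⁻¹ - 2*s)/5) • σr) (((s - s⁻¹)/5) • 1)
        (((s - s⁻¹)/5) • 1) (((2*s - 2*s⁻¹)/5) • σr) := by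
  have e1 : Qq s = s • Minv4 + s⁻¹ • ((5:ℝ)⁻¹ • !![2,0,0,2; 0,2,2,0; 0,2,2,0; 2,0,0,2]) := by
    rw [Qq, hAMA]
  have e2 : Qp s = s • ((5:ℝ)⁻¹ • Asq) - s⁻¹ • ((5:ℝ)⁻¹ • Asq) := by rw [Qp, hMA, hAM]
  have e3 : Pq s = s • ((5:ℝ)⁻¹ • Asq) - s⁻¹ • ((5:ℝ)⁻¹ • Asq) := by rw [Pq, hAM, hMA]
  have e4 : Pp s = s • ((5:ℝ)⁻¹ • !![2,0,0,2; 0,2,2,0; 0,2,2,0; 2,0,0,2]) + s⁻¹ • Minv4 := by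
    rw [Pp, hAMA]
  rw [e1, e2, e3, e4]
  ext i j
  rcases i with i | i <;> rcases j with j | j <;> fin_cases i <;> fin_cases j <;>
    · simp only [toBlocks₁₂, of_apply, submatrix_apply, sqIdx, fromBlocks_apply₁₁,
        fromBlocks_apply₁₂, fromBlocks_apply₂₁, fromBlocks_apply₂₂]
      norm_num [Minv4, Asq, σr, Matrix.one_apply]
      try ring

/-! ### Complexification machinery -/

def cMat (X Y : Matrix (Fin 2) (Fin 2) ℝ) : Matrix (Fin 2) (Fin 2) ℂ :=
  Matrix.of fun i j => (X i j : ℂ) + Complex.I * (Y i j)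

lemma cMat_apply (X Y : Matrix (Fin 2) (Fin 2) ℝ) (i j : Fin 2) :
    cMat X Y i j = (X i j : ℂ) + Complex.I * (Y i j) := rfl

lemma cMat_mul (X Y Z W : Matrix (Fin 2) (Fin 2) ℝ) :
    cMat X Y * cMat Z W = cMat (X*Z - Y*W) (X*W + Y*Z) := by
  ext i j
  simp only [cMat, Matrix.mul_apply, Fin.sum_univ_two, Matrix.of_apply, Matrix.sub_apply,
    Matrix.add_apply]
  push_cast
  ring_nf
  rw [Complex.I_sq]
  ring

lemma cMat_transpose (X Y : Matrix (Fin 2) (Fin 2) ℝ) :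
    (cMat X Y)ᵀ = cMat Xᵀ Yᵀ := by
  ext i j; simp [cMat]

lemma cMat_reIm (U : Matrix (Fin 2) (Fin 2) ℂ) : cMat (reM U) (imM U) = U := by
  ext i j
  simp only [cMat, reM, imM, Matrix.of_apply]
  apply Complex.ext <;> simp

lemma key (U V : Matrix (Fin 2) (Fin 2) ℂ) (g11 g12 g21 g22 : Matrix (Fin 2) (Fin 2) ℝ) :
    cMat ((passive2 U * fromBlocks g11 g12 g21 g22 * (passive2 V)ᵀ).toBlocks₁₁
          - (passive2 U * fromBlocks g11 g12 g21 g22 * (passive2 V)ᵀ).toBlocks₂₂)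
        ((passive2 U * fromBlocks g11 g12 g21 g22 * (passive2 V)ᵀ).toBlocks₁₂
          + (passive2 U * fromBlocks g11 g12 g21 g22 * (passive2 V)ᵀ).toBlocks₂₁)
      = U * cMat (g11 - g22) (g12 + g21) * Vᵀ := by
  conv_rhs => rw [← cMat_reIm U, ← cMat_reIm V]
  rw [cMat_transpose, cMat_mul, cMat_mul]
  simp only [passive2, fromBlocks_transpose, transpose_neg, fromBlocks_multiply,
    toBlocks_fromBlocks₁₁, toBlocks_fromBlocks₁₂, toBlocks_fromBlocks₂₁, toBlocks_fromBlocks₂₂,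
    Matrix.neg_mul, Matrix.mul_neg, neg_neg]
  congr 1 <;> noncomm_ring

def NAB : Matrix (Fin 2) (Fin 2) ℂ := !![2*Complex.I, -4; -4, 2*Complex.I]

lemma cMat_NAB (s : ℝ) :
    cMat ((((2*s⁻¹ - 2*s)/5) • σr) - (((2*s - 2*s⁻¹)/5) • σr))
      ((((s - s⁻¹)/5) • 1) + (((s - s⁻¹)/5) • 1))
    = (((s - s⁻¹)/5 : ℝ) : ℂ) • NAB := by
  ext i j
  fin_cases i <;> fin_cases j <;>
    · simp [cMat, σr, NAB, Matrix.one_apply]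
      push_cast
      ring

lemma NAB_mul : NAB * NABᴴ = (20:ℂ) • 1 := by
  ext i j
  fin_cases i <;> fin_cases j <;>
    · simp [NAB, Matrix.mul_apply, Fin.sum_univ_two, Matrix.conjTranspose_apply,
        Matrix.one_apply]
      ring_nf
      simp [Complex.I_sq, Complex.ext_iff]
      try norm_num

lemma GGH_eq (U_A U_B : Matrix (Fin 2) (Fin 2) ℂ)
    (hUA : U_A ∈ Matrix.unitaryGroup (Fin 2) ℂ)
    (hUB : U_B ∈ Matrix.unitaryGroup (Fin 2) ℂ) :
    (U_A * NAB * U_Bᵀ) * (U_A * NAB * U_Bᵀ)ᴴ = (20:ℂ) • 1 := by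
  have hB : U_Bᵀ * (U_Bᵀ)ᴴ = 1 := by
    have h' : star U_B * U_B = 1 := Matrix.mem_unitaryGroup_iff'.mp hUB
    have hswap : (U_Bᴴ)ᵀ = (U_Bᵀ)ᴴ := rfl
    have := congrArg Matrix.transpose h'
    simpa [Matrix.transpose_mul, Matrix.star_eq_conjTranspose, hswap] using this
  have hA : U_A * U_Aᴴ = 1 := by
    have h' : U_A * star U_A = 1 := Matrix.mem_unitaryGroup_iff.mp hUA
    simpa [Matrix.star_eq_conjTranspose] using h'
  calc (U_A * NAB * U_Bᵀ) * (U_A * NAB * U_Bᵀ)ᴴ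
      = U_A * (NAB * ((U_Bᵀ * (U_Bᵀ)ᴴ) * (NABᴴ * U_Aᴴ))) := by
        simp only [Matrix.conjTranspose_mul, Matrix.mul_assoc]
    _ = U_A * ((NAB * NABᴴ) * U_Aᴴ) := by rw [hB, Matrix.one_mul, Matrix.mul_assoc]
    _ = (20:ℂ) • 1 := by
        rw [NAB_mul, Matrix.smul_mul, Matrix.mul_smul, Matrix.one_mul, hA]


/-- Impossibility of ideal routing on the square cluster by local passive optics:
for every `s ≠ 1` and all 2×2 complex unitaries `U_A`, `U_B` applied locally by Alice
(modes 1,2) and Bob (modes 3,4), no pair of modes `(a, b)` of Alice and Bob ends up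
in the perfect EPR state `Γ_EPR((s+s⁻¹)/2, (s−s⁻¹)/2)`. -/
theorem square_routing_impossible (s : ℝ) (hs : 0 < s) (hs1 : s ≠ 1)
    (U_A U_B : Matrix (Fin 2) (Fin 2) ℂ)
    (hUA : U_A ∈ Matrix.unitaryGroup (Fin 2) ℂ)
    (hUB : U_B ∈ Matrix.unitaryGroup (Fin 2) ℂ) :
    ∀ a b : Fin 2,
      (Matrix.fromBlocks (passive2 U_A) 0 0 (passive2 U_B) *
            (GammaSquare s).submatrix sqIdx sqIdx *
            (Matrix.fromBlocks (passive2 U_A) 0 0 (passive2 U_B))ᵀ).submatrix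
          (pairEmb a b) (pairEmb a b) ≠
        GammaEPR ((s + s⁻¹) / 2) ((s - s⁻¹) / 2) := by
  intro a b h
  have hT : ((GammaSquare s).submatrix sqIdx sqIdx).toBlocks₁₂ =
      fromBlocks (((2*s⁻¹ - 2*s)/5) • σr) (((s - s⁻¹)/5) • 1)
        (((s - s⁻¹)/5) • 1) (((2*s - 2*s⁻¹)/5) • σr) := by
    rw [gammaSquare_eq]; exact toBlocks12_eq s
  have hprod : Matrix.fromBlocks (passive2 U_A) 0 0 (passive2 U_B) *
      (GammaSquare s).submatrix sqIdx sqIdx *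
      (Matrix.fromBlocks (passive2 U_A) 0 0 (passive2 U_B))ᵀ
    = fromBlocks
      (passive2 U_A * ((GammaSquare s).submatrix sqIdx sqIdx).toBlocks₁₁ * (passive2 U_A)ᵀ)
      (passive2 U_A * ((GammaSquare s).submatrix sqIdx sqIdx).toBlocks₁₂ * (passive2 U_B)ᵀ)
      (passive2 U_B * ((GammaSquare s).submatrix sqIdx sqIdx).toBlocks₂₁ * (passive2 U_A)ᵀ)
      (passive2 U_B * ((GammaSquare s).submatrix sqIdx sqIdx).toBlocks₂₂ * (passive2 U_B)ᵀ) := by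
    conv_lhs => rw [← fromBlocks_toBlocks ((GammaSquare s).submatrix sqIdx sqIdx)]
    rw [fromBlocks_transpose, fromBlocks_multiply, fromBlocks_multiply]
    simp [Matrix.mul_assoc]
  rw [hprod, hT] at h
  have h11 := Matrix.ext_iff.mpr h (Sum.inl 0) (Sum.inl 1)
  have h12 := Matrix.ext_iff.mpr h (Sum.inl 0) (Sum.inr 1)
  have h21 := Matrix.ext_iff.mpr h (Sum.inr 0) (Sum.inl 1)
  have h22 := Matrix.ext_iff.mpr h (Sum.inr 0) (Sum.inr 1)
  simp only [Matrix.submatrix_apply, pairEmb, if_pos, reduceIte, Fin.isValue,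
    fromBlocks_apply₁₁, fromBlocks_apply₁₂, fromBlocks_apply₂₁, fromBlocks_apply₂₂,
    GammaEPR, Matrix.smul_apply, Matrix.one_apply, Matrix.cons_val', Matrix.cons_val_zero,
    Matrix.cons_val_one, Matrix.head_cons, Matrix.head_fin_const, Matrix.empty_val',
    Matrix.cons_val_fin_one] at h11 h12 h21 h22
  norm_num at h11 h12 h21 h22
  have hkey := key U_A U_B (((2*s⁻¹ - 2*s)/5) • σr) (((s - s⁻¹)/5) • 1)
      (((s - s⁻¹)/5) • 1) (((2*s - 2*s⁻¹)/5) • σr)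
  rw [cMat_NAB, Matrix.mul_smul, Matrix.smul_mul] at hkey
  have hab := Matrix.ext_iff.mpr hkey a b
  simp only [cMat_apply, Matrix.sub_apply, Matrix.add_apply, Matrix.toBlocks₁₁,
    Matrix.toBlocks₁₂, Matrix.toBlocks₂₁, Matrix.toBlocks₂₂, Matrix.of_apply,
    Matrix.smul_apply, smul_eq_mul] at hab
  rw [h11, h12, h21, h22] at hab
  -- now derive G a b = 5 I
  set G := U_A * NAB * U_Bᵀ with hGdef
  have hr : s - s⁻¹ ≠ 0 := by
    intro h0
    have hss : (s - 1) * (s + 1) = 0 := by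
      have h1 : s * s = 1 := by
        field_simp at h0
        nlinarith [h0]
      nlinarith
    rcases mul_eq_zero.mp hss with h1 | h1
    · exact hs1 (by linarith)
    · linarith
  have hrc : ((s - s⁻¹ : ℝ) : ℂ) ≠ 0 := Complex.ofReal_ne_zero.mpr hr
  have hGab : G a b = 5 * Complex.I := by
    refine mul_left_cancel₀ hrc ?_
    push_cast
    push_cast at hab
    linear_combination (-5 : ℂ) * hab
  have hGG := GGH_eq U_A U_B hUA hUB
  rw [← hGdef] at hGG
  have hrow := Matrix.ext_iff.mpr hGG a a
  simp only [Matrix.mul_apply, Fin.sum_univ_two, Matrix.conjTranspose_apply,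
    Matrix.smul_apply, Matrix.one_apply_eq, smul_eq_mul, mul_one, Complex.star_def,
    Complex.mul_conj] at hrow
  have hR : Complex.normSq (G a 0) + Complex.normSq (G a 1) = 20 := by
    exact_mod_cast hrow
  have h25 : Complex.normSq (G a b) = 25 := by
    rw [hGab]
    simp [Complex.normSq_apply]
    norm_num
  have hb : b = 0 ∨ b = 1 := by
    rcases b with ⟨bv, hbv⟩
    interval_cases bv
    · exact Or.inl rfl
    · exact Or.inr rfl
  rcases hb with rfl | rfl
  · rw [h25] at hR
    linarith [Complex.normSq_nonneg (G a 1)]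
  · rw [h25] at hR
    linarith [Complex.normSq_nonneg (G a 0)]
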